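/- Every ℓ-partition λ corresponds uniquely to a triple (μ, r, κ), where μ is an ℓ-core with μ_1 - μ_2 ≠ ℓ-1, r ≥ 0, and κ is a partition with at most r+1 parts; λ is obtained by prepending r rows to μ with successive differences ℓ-1 and then adding κ_i horizontal ℓ-rim hooks to row i for 1 ≤ i ≤ r+1. Conversely, every such triple yields an ℓ-partition. -/

import Mathlib

/-- The hook length of the box `(a, b)` (0-indexed row `a`, column `b`)
of the Young diagram `μ`: the number of boxes to the right in its row,
plus the number of boxes below in its column, plus one. -/
def hookLen (μ : YoungDiagram) (a b : ℕ) : ℕ :=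
  μ.rowLen a + μ.colLen b - a - b - 1

/-- A partition (Young diagram) is an `ℓ`-core when no box has hook length
divisible by `ℓ`. -/
def IsCore (ℓ : ℕ) (μ : YoungDiagram) : Prop :=
  ∀ a b : ℕ, (a, b) ∈ μ → ¬ ℓ ∣ hookLen μ a b

/-- Two cells are adjacent if they share an edge. -/
def AdjCell (p q : ℕ × ℕ) : Prop :=
  (p.1 = q.1 ∧ (p.2 = q.2 + 1 ∨ q.2 = p.2 + 1)) ∨
  (p.2 = q.2 ∧ (p.1 = q.1 + 1 ∨ q.1 = p.1 + 1))

/-- A finite set of cells is connected if any two of its cells are joined by a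
path of edge-adjacent cells inside the set. -/
def ConnectedCells (s : Finset (ℕ × ℕ)) : Prop :=
  ∀ p ∈ s, ∀ q ∈ s,
    Relation.ReflTransGen (fun x y => x ∈ s ∧ y ∈ s ∧ AdjCell x y) p q

/-- A set of cells contains no 2×2 square. -/
def No2x2 (s : Finset (ℕ × ℕ)) : Prop :=
  ¬ ∃ a b : ℕ, (a, b) ∈ s ∧ (a + 1, b) ∈ s ∧ (a, b + 1) ∈ s ∧ (a + 1, b + 1) ∈ s

/-- `s` is a removable `ℓ`-rim hook of the Young diagram `lam`: a connected set of
`ℓ` cells of `lam`, containing no 2×2 square, whose removal from `lam` leaves the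
Young diagram of a partition. -/
def IsRemovableRimHook (ℓ : ℕ) (lam : YoungDiagram) (s : Finset (ℕ × ℕ)) : Prop :=
  ∃ μ : YoungDiagram, μ.cells ⊆ lam.cells ∧ s = lam.cells \ μ.cells ∧
    s.card = ℓ ∧ ConnectedCells s ∧ No2x2 s

/-- A set of cells all lying in a single row. -/
def HorizontalCells (s : Finset (ℕ × ℕ)) : Prop := ∀ p ∈ s, ∀ q ∈ s, p.1 = q.1

/-- A set of cells all lying in a single column. -/
def VerticalCells (s : Finset (ℕ × ℕ)) : Prop := ∀ p ∈ s, ∀ q ∈ s, p.2 = q.2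

/-- Carter's condition (⋆): for all pairs of boxes in the same column of `lam`,
`ℓ` divides one hook length iff it divides the other. -/
def StarCond (ℓ : ℕ) (lam : YoungDiagram) : Prop :=
  ∀ a b c : ℕ, (a, c) ∈ lam → (b, c) ∈ lam →
    (ℓ ∣ hookLen lam a c ↔ ℓ ∣ hookLen lam b c)

/-- `b` is obtained from `a` by removing a horizontal `ℓ`-rim hook;
equivalently `a` is obtained from `b` by adding a horizontal `ℓ`-rim hook. -/
def RemoveHorizHook (ℓ : ℕ) (a b : YoungDiagram) : Prop :=
  ∃ s, IsRemovableRimHook ℓ a s ∧ HorizontalCells s ∧ b.cells = a.cells \ s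

/-- A partition is `ℓ`-regular if it has no `ℓ` equal nonzero parts. -/
def Regular (ℓ : ℕ) (lam : YoungDiagram) : Prop :=
  ∀ i : ℕ, lam.rowLen i = lam.rowLen (i + ℓ - 1) → lam.rowLen i = 0

/-- An `ℓ`-partition: an `ℓ`-regular partition each of whose removable `ℓ`-rim hooks
is horizontal, and such that this remains true after removing any sequence of
horizontal `ℓ`-rim hooks. -/
def IsEllPartition (ℓ : ℕ) (lam : YoungDiagram) : Prop :=
  Regular ℓ lam ∧
  ∀ μ : YoungDiagram, Relation.ReflTransGen (RemoveHorizHook ℓ) lam μ →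
    ∀ s, IsRemovableRimHook ℓ μ s → HorizontalCells s

/-- `lam` decomposes as the triple `(μ, r, κ)`: `μ` is an `ℓ`-core with
`μ₁ - μ₂ ≠ ℓ - 1`, `κ` is a partition with at most `r + 1` parts, and `lam` is
obtained from `μ` by prepending `r` rows with successive differences `ℓ - 1` and
adding `κ i` horizontal `ℓ`-rim hooks to row `i` for `0 ≤ i ≤ r` (0-indexed). -/
def Decomp (ℓ : ℕ) (μ : YoungDiagram) (r : ℕ) (κ : ℕ → ℕ) (lam : YoungDiagram) : Prop :=
  IsCore ℓ μ ∧ μ.rowLen 0 - μ.rowLen 1 ≠ ℓ - 1 ∧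
  Antitone κ ∧ (∀ i, r + 1 ≤ i → κ i = 0) ∧
  (∀ i ≤ r, lam.rowLen i = μ.rowLen 0 + (r - i) * (ℓ - 1) + ℓ * κ i) ∧
  (∀ i, 1 ≤ i → lam.rowLen (r + i) = μ.rowLen i)

namespace EllAux

/-- Diagrams with the same row lengths are equal. -/
theorem yd_ext {μ ν : YoungDiagram} (h : ∀ i, μ.rowLen i = ν.rowLen i) : μ = ν := by
  ext ⟨i, j⟩
  rw [YoungDiagram.mem_cells, YoungDiagram.mem_cells, YoungDiagram.mem_iff_lt_rowLen,
    YoungDiagram.mem_iff_lt_rowLen, h]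

theorem rowLen_le (μ : YoungDiagram) {i j : ℕ} (h : i ≤ j) : μ.rowLen j ≤ μ.rowLen i :=
  μ.rowLen_anti i j h

theorem rowLen_eventually_zero (μ : YoungDiagram) :
    ∀ i, μ.colLen 0 ≤ i → μ.rowLen i = 0 := by
  intro i hi
  by_contra h
  have : (i, 0) ∈ μ := by
    rw [YoungDiagram.mem_iff_lt_rowLen]; omega
  rw [YoungDiagram.mem_iff_lt_colLen] at this
  omega

/-- Construct a Young diagram with prescribed row lengths. -/
theorem exists_diagram (h : ℕ → ℕ) (mono : ∀ i, h (i+1) ≤ h i) (N : ℕ)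
    (hN : ∀ i, N ≤ i → h i = 0) : ∃ μ : YoungDiagram, ∀ i, μ.rowLen i = h i := by
  have mono' : ∀ {i j : ℕ}, i ≤ j → h j ≤ h i := fun {i j} hij =>
    antitone_nat_of_succ_le mono hij
  have hs : IsLowerSet (((Finset.range N ×ˢ Finset.range (h 0)).filter
      (fun p => p.2 < h p.1) : Finset (ℕ × ℕ)) : Set (ℕ × ℕ)) := by
    intro ⟨a, b⟩ ⟨a', b'⟩ hle hab
    simp only [Finset.coe_filter, Finset.mem_coe, Finset.mem_product, Finset.mem_range,
      Set.mem_setOf_eq] at hab ⊢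
    obtain ⟨⟨hiN, hj0⟩, hjh⟩ := hab
    obtain ⟨h1, h2⟩ := hle
    simp only at h1 h2
    exact ⟨⟨lt_of_le_of_lt h1 hiN, lt_of_le_of_lt h2 hj0⟩,
      lt_of_le_of_lt h2 (lt_of_lt_of_le hjh (mono' h1))⟩
  set μ : YoungDiagram := ⟨(Finset.range N ×ˢ Finset.range (h 0)).filter
      (fun p => p.2 < h p.1), hs⟩ with hμ
  have hmem : ∀ i j, (i, j) ∈ μ ↔ j < h i := by
    intro i j
    constructor
    · intro hj
      have : (i, j) ∈ (Finset.range N ×ˢ Finset.range (h 0)).filter (fun p => p.2 < h p.1) := hj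
      simp only [Finset.mem_filter] at this
      exact this.2
    · intro hj
      have hiN : i < N := by
        by_contra hc
        rw [hN i (by omega)] at hj; omega
      have hj0 : j < h 0 := lt_of_lt_of_le hj (mono' (Nat.zero_le i))
      show (i, j) ∈ Finset.filter _ _
      simp only [Finset.mem_filter, Finset.mem_product, Finset.mem_range]
      exact ⟨⟨hiN, hj0⟩, hj⟩
  refine ⟨μ, fun i => ?_⟩
  rcases Nat.lt_or_ge (μ.rowLen i) (h i) with hlt | hge
  · have := (hmem i (μ.rowLen i)).mpr hlt
    rw [YoungDiagram.mem_iff_lt_rowLen] at this; omega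
  · rcases Nat.eq_or_lt_of_le hge with he | hgt
    · omega
    · have := (hmem i (h i)).mp (by rw [YoungDiagram.mem_iff_lt_rowLen]; omega)
      omega


theorem mem_sdiff_cells {lam μ : YoungDiagram} {i j : ℕ} :
    (i, j) ∈ lam.cells \ μ.cells ↔ μ.rowLen i ≤ j ∧ j < lam.rowLen i := by
  rw [Finset.mem_sdiff, YoungDiagram.mem_cells, YoungDiagram.mem_cells,
    YoungDiagram.mem_iff_lt_rowLen, YoungDiagram.mem_iff_lt_rowLen]
  omega

theorem cells_subset_of_rowLen_le {μ lam : YoungDiagram}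
    (h : ∀ i, μ.rowLen i ≤ lam.rowLen i) : μ.cells ⊆ lam.cells := by
  intro ⟨i, j⟩ hij
  rw [YoungDiagram.mem_cells, YoungDiagram.mem_iff_lt_rowLen] at hij ⊢
  exact lt_of_lt_of_le hij (h i)

theorem rowLen_le_of_subset {μ lam : YoungDiagram} (h : μ.cells ⊆ lam.cells) (i : ℕ) :
    μ.rowLen i ≤ lam.rowLen i := by
  by_contra hc
  have : (i, lam.rowLen i) ∈ μ := by rw [YoungDiagram.mem_iff_lt_rowLen]; omega
  have := h (by rwa [YoungDiagram.mem_cells] : (i, lam.rowLen i) ∈ μ.cells)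
  rw [YoungDiagram.mem_cells, YoungDiagram.mem_iff_lt_rowLen] at this
  omega

theorem adj_symm {p q : ℕ × ℕ} (h : AdjCell p q) : AdjCell q p := by
  unfold AdjCell at *
  tauto


theorem telescope (f g : ℕ → ℕ) (a : ℕ) : ∀ d,
    (∀ i, a ≤ i → i < a + d → g i + 1 = f (i + 1)) →
    (∀ i, a ≤ i → i ≤ a + d → g i < f i) →
    (∑ i ∈ Finset.Icc a (a + d), (f i - g i)) + g (a + d) = f a + d := by
  intro d
  induction d with
  | zero =>
    intro _ hne
    simp only [Nat.add_zero, Finset.Icc_self, Finset.sum_singleton]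
    have := hne a le_rfl le_rfl
    omega
  | succ d ih =>
    intro hmid hne
    have hstep : Finset.Icc a (a + (d + 1)) = insert (a + (d + 1)) (Finset.Icc a (a + d)) := by
      ext x
      simp only [Finset.mem_Icc, Finset.mem_insert]
      omega
    rw [hstep, Finset.sum_insert (by simp only [Finset.mem_Icc]; omega)]
    have ihh := ih (fun i h1 h2 => hmid i h1 (by omega)) (fun i h1 h2 => hne i h1 (by omega))
    have e1 := hmid (a + d) (by omega) (by omega)
    have e2 := hne (a + d + 1) (by omega) (by omega)
    have e3 := hne (a + d) (by omega) (by omega)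
    have hch : a + (d + 1) = (a + d) + 1 := by omega
    rw [hch] at *
    omega

/-- The counting lemma for skew strips. -/
theorem sdiff_card {lam μ : YoungDiagram} {a c : ℕ} (hac : a ≤ c)
    (hout : ∀ i, i < a ∨ c < i → μ.rowLen i = lam.rowLen i)
    (hmid : ∀ i, a ≤ i → i < c → μ.rowLen i + 1 = lam.rowLen (i + 1))
    (hc : μ.rowLen c < lam.rowLen c) :
    (lam.cells \ μ.cells).card + μ.rowLen c = lam.rowLen a + (c - a) := by
  have hne : ∀ i, a ≤ i → i ≤ c → μ.rowLen i < lam.rowLen i := by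
    intro i h1 h2
    rcases Nat.eq_or_lt_of_le h2 with he | hlt
    · subst he; exact hc
    · have := hmid i h1 hlt
      have h3 : lam.rowLen (i+1) ≤ lam.rowLen i := rowLen_le lam (Nat.le_succ i)
      omega
  -- decompose as biUnion
  have hdecomp : lam.cells \ μ.cells =
      (Finset.Icc a c).biUnion (fun i =>
        (Finset.Ico (μ.rowLen i) (lam.rowLen i)).image (fun j => (i, j))) := by
    ext ⟨i, j⟩
    rw [mem_sdiff_cells, Finset.mem_biUnion]
    constructor
    · rintro ⟨h1, h2⟩
      have hia : a ≤ i := by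
        by_contra hcon
        have := hout i (by omega)
        omega
      have hic : i ≤ c := by
        by_contra hcon
        have := hout i (by omega)
        omega
      exact ⟨i, Finset.mem_Icc.mpr ⟨hia, hic⟩, Finset.mem_image.mpr
        ⟨j, Finset.mem_Ico.mpr ⟨h1, h2⟩, rfl⟩⟩
    · rintro ⟨i', hi', hj⟩
      rw [Finset.mem_image] at hj
      obtain ⟨j', hj', he⟩ := hj
      obtain ⟨rfl, rfl⟩ : i' = i ∧ j' = j := by
        constructor <;> · injection he <;> omega
      rw [Finset.mem_Ico] at hj'
      exact hj'
  rw [hdecomp, Finset.card_biUnion]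
  swap
  · intro x hx y hy hxy
    simp only [Finset.disjoint_left, Finset.mem_image]
    rintro ⟨i, j⟩ ⟨j1, _, he1⟩ ⟨j2, _, he2⟩
    apply hxy
    have : x = i := by injection he1
    have : y = i := by injection he2
    omega
  have hcardrow : ∀ i, ((Finset.Ico (μ.rowLen i) (lam.rowLen i)).image (fun j => (i, j))).card
      = lam.rowLen i - μ.rowLen i := by
    intro i
    rw [Finset.card_image_of_injective _ (fun x y h => by injection h), Nat.card_Ico]
  rw [Finset.sum_congr rfl (fun i _ => hcardrow i)]
  obtain ⟨d, rfl⟩ : ∃ d, c = a + d := ⟨c - a, by omega⟩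
  have := telescope lam.rowLen μ.rowLen a d (fun i h1 h2 => hmid i h1 h2) hne
  omega

/-- Crossing lemma for connected paths. -/
theorem cross_lemma {R : ℕ × ℕ → ℕ × ℕ → Prop} {T : Finset (ℕ × ℕ)} {p q : ℕ × ℕ}
    (hp : p ∈ T) (hq : q ∉ T) (hpq : Relation.ReflTransGen R p q) :
    ∃ x y, x ∈ T ∧ y ∉ T ∧ R x y := by
  induction hpq with
  | refl => exact absurd hp hq
  | tail _ hbc ih =>
    rename_i b c _
    by_cases hb : b ∈ T
    · exact ⟨b, c, hb, hq, hbc⟩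
    · exact ih hb

/-- Path along a row. -/
theorem row_path {s : Finset (ℕ × ℕ)} {i j : ℕ} :
    ∀ d : ℕ, (∀ t, t ≤ d → (i, j + t) ∈ s) →
    Relation.ReflTransGen (fun x y => x ∈ s ∧ y ∈ s ∧ AdjCell x y) (i, j) (i, j + d) := by
  intro d
  induction d with
  | zero => intro _; exact Relation.ReflTransGen.refl
  | succ d ih =>
    intro hmem
    refine Relation.ReflTransGen.tail (ih (fun t ht => hmem t (by omega))) ?_
    refine ⟨hmem d (by omega), hmem (d+1) le_rfl, ?_⟩
    left
    exact ⟨rfl, Or.inr rfl⟩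

theorem path_symm {s : Finset (ℕ × ℕ)} {p q : ℕ × ℕ}
    (h : Relation.ReflTransGen (fun x y => x ∈ s ∧ y ∈ s ∧ AdjCell x y) p q) :
    Relation.ReflTransGen (fun x y => x ∈ s ∧ y ∈ s ∧ AdjCell x y) q p := by
  refine @Std.Symm.symm _ _ (@Relation.ReflTransGen.stdSymm _ _ ⟨?_⟩) _ _ h
  intro x y ⟨h1, h2, h3⟩
  exact ⟨h2, h1, adj_symm h3⟩

theorem row_conn {s : Finset (ℕ × ℕ)} {i j j' : ℕ}
    (h : ∀ t, min j j' ≤ t → t ≤ max j j' → (i, t) ∈ s) :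
    Relation.ReflTransGen (fun x y => x ∈ s ∧ y ∈ s ∧ AdjCell x y) (i, j) (i, j') := by
  rcases le_total j j' with hle | hle
  · obtain ⟨d, rfl⟩ : ∃ d, j' = j + d := ⟨j' - j, by omega⟩
    exact row_path d (fun t ht => h (j + t) (by omega) (by omega))
  · obtain ⟨d, rfl⟩ : ∃ d, j = j' + d := ⟨j - j', by omega⟩
    exact path_symm (row_path d (fun t ht => h (j' + t) (by omega) (by omega)))

/-- A strip whose rows are intervals, with consecutive rows overlapping, is connected. -/
theorem strip_connected {s : Finset (ℕ × ℕ)} {a c : ℕ} {lo hi : ℕ → ℕ} (hac : a ≤ c)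
    (hmem : ∀ p : ℕ × ℕ, p ∈ s ↔ (a ≤ p.1 ∧ p.1 ≤ c ∧ lo p.1 ≤ p.2 ∧ p.2 < hi p.1))
    (hlink : ∀ i, a ≤ i → i < c → lo (i + 1) ≤ lo i ∧ lo i < hi (i + 1)) :
    ConnectedCells s := by
  have hrow : ∀ i j j', (i, j) ∈ s → (i, j') ∈ s →
      Relation.ReflTransGen (fun x y => x ∈ s ∧ y ∈ s ∧ AdjCell x y) (i, j) (i, j') := by
    intro i j j' hj hj'
    rw [hmem] at hj hj'
    refine row_conn (fun t h1 h2 => ?_)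
    rw [hmem]
    simp only at *
    omega
  -- path from any cell down to the anchor of row c
  have hdown : ∀ k (i j : ℕ), i + k = c → (i, j) ∈ s →
      Relation.ReflTransGen (fun x y => x ∈ s ∧ y ∈ s ∧ AdjCell x y) (i, j) (c, lo c) := by
    intro k
    induction k with
    | zero =>
      intro i j hi hm
      subst hi
      simp only [Nat.add_zero]
      refine hrow _ _ _ hm ?_
      rw [hmem]
      have := (hmem (i, j)).mp hm
      simp only at *
      omega
    | succ k ih =>
      intro i j hi hm
      have hmm := (hmem (i, j)).mp hm
      simp only at hmm
      have hic : i < c := by omega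
      have hl := hlink i hmm.1 hic
      have h1 : (i, lo i) ∈ s := by rw [hmem]; simp only; omega
      have h2 : (i + 1, lo i) ∈ s := by rw [hmem]; simp only; omega
      refine Relation.ReflTransGen.trans (hrow i j (lo i) hm h1) ?_
      refine Relation.ReflTransGen.head ⟨h1, h2, ?_⟩ (ih (i+1) (lo i) (by omega) h2)
      right
      exact ⟨rfl, Or.inr rfl⟩
  intro p hp q hq
  obtain ⟨i, j⟩ := p
  obtain ⟨i', j'⟩ := q
  have hpc := (hmem (i, j)).mp hp
  have hqc := (hmem (i', j')).mp hq
  simp only at hpc hqc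
  exact Relation.ReflTransGen.trans (hdown (c - i) i j (by omega) hp)
    (path_symm (hdown (c - i') i' j' (by omega) hq))

/-- Full structural analysis of a removable rim hook. -/
theorem hook_analysis {ℓ : ℕ} (hl : 1 ≤ ℓ) {lam μ : YoungDiagram} {s : Finset (ℕ × ℕ)}
    (hsub : μ.cells ⊆ lam.cells) (hsdef : s = lam.cells \ μ.cells) (hcard : s.card = ℓ)
    (hconn : ConnectedCells s) (hno2 : No2x2 s) :
    ∃ a c, a ≤ c ∧
      (∀ i, i < a ∨ c < i → μ.rowLen i = lam.rowLen i) ∧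
      (∀ i, a ≤ i → i < c → μ.rowLen i + 1 = lam.rowLen (i + 1)) ∧
      lam.rowLen (c + 1) ≤ μ.rowLen c ∧ μ.rowLen c < lam.rowLen c ∧
      lam.rowLen a + (c - a) = μ.rowLen c + ℓ ∧
      (HorizontalCells s ↔ a = c) := by
  have hmem : ∀ i j : ℕ, (i, j) ∈ s ↔ (μ.rowLen i ≤ j ∧ j < lam.rowLen i) := by
    intro i j; rw [hsdef]; exact mem_sdiff_cells
  have hne : s.Nonempty := by
    rw [← Finset.card_pos, hcard]; omega
  have hAne : (s.image Prod.fst).Nonempty := hne.image _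
  obtain ⟨a, c, haA, hcA, hbnd⟩ : ∃ a c, a ∈ s.image Prod.fst ∧ c ∈ s.image Prod.fst ∧
      ∀ x ∈ s.image Prod.fst, a ≤ x ∧ x ≤ c :=
    ⟨_, _, Finset.min'_mem _ hAne, Finset.max'_mem _ hAne,
      fun x hx => ⟨Finset.min'_le _ x hx, Finset.le_max' _ x hx⟩⟩
  have hac : a ≤ c := (hbnd c hcA).1
  have hrowa : ∃ j, (a, j) ∈ s := by
    rw [Finset.mem_image] at haA
    obtain ⟨⟨i, j⟩, hij, he⟩ := haA
    exact ⟨j, by simp only at he; rwa [← he]⟩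
  have hrowc : ∃ j, (c, j) ∈ s := by
    rw [Finset.mem_image] at hcA
    obtain ⟨⟨i, j⟩, hij, he⟩ := hcA
    exact ⟨j, by simp only at he; rwa [← he]⟩
  have hbounds : ∀ i j, (i, j) ∈ s → a ≤ i ∧ i ≤ c := by
    intro i j hij
    exact hbnd i (Finset.mem_image.mpr ⟨(i, j), hij, rfl⟩)
  have hout : ∀ i, i < a ∨ c < i → μ.rowLen i = lam.rowLen i := by
    intro i hi
    have hle := rowLen_le_of_subset hsub i
    rcases Nat.eq_or_lt_of_le hle with he | hlt
    · exact he
    · exfalso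
      have : (i, μ.rowLen i) ∈ s := (hmem _ _).mpr ⟨le_rfl, hlt⟩
      have := hbounds _ _ this
      omega
  -- overlap of consecutive rows
  have hoverlap : ∀ i, a ≤ i → i < c → ∃ j, (i, j) ∈ s ∧ (i + 1, j) ∈ s := by
    intro i h1 h2
    obtain ⟨ja, hja⟩ := hrowa
    obtain ⟨jc, hjc⟩ := hrowc
    set T := s.filter (fun p => p.1 ≤ i) with hT
    have hpa : (a, ja) ∈ T := Finset.mem_filter.mpr ⟨hja, by simp only; omega⟩
    have hqc : (c, jc) ∉ T := by
      rw [Finset.mem_filter]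
      push_neg
      intro _
      simp only; omega
    obtain ⟨x, y, hx, hy, hR⟩ := cross_lemma hpa hqc (hconn _ hja _ hjc)
    obtain ⟨x1, x2⟩ := x
    obtain ⟨y1, y2⟩ := y
    obtain ⟨hxs, hys, hadj⟩ := hR
    rw [Finset.mem_filter] at hx
    simp only at hx
    have hy1 : ¬ y1 ≤ i := by
      intro hcon
      exact hy (Finset.mem_filter.mpr ⟨hys, hcon⟩)
    simp only [AdjCell] at hadj
    rcases hadj with ⟨he, _⟩ | ⟨he, hor⟩
    · omega
    · rcases hor with h3 | h3
      · omega
      · have hx1 : x1 = i := by omega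
        have hy2 : y1 = i + 1 := by omega
        refine ⟨x2, by rwa [← hx1], ?_⟩
        rw [hy2, ← he] at hys
        exact hys
  have hmid : ∀ i, a ≤ i → i < c → μ.rowLen i + 1 = lam.rowLen (i + 1) := by
    intro i h1 h2
    obtain ⟨j, hj1, hj2⟩ := hoverlap i h1 h2
    rw [hmem] at hj1 hj2
    -- μ_i ≤ j < lam_{i+1}; so μ_i < lam_{i+1}
    have hlt : μ.rowLen i < lam.rowLen (i + 1) := by omega
    -- no 2x2 forces equality
    by_contra hcon
    have hlt2 : μ.rowLen i + 1 < lam.rowLen (i + 1) := by omega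
    apply hno2
    refine ⟨i, μ.rowLen i, ?_, ?_, ?_, ?_⟩ <;> rw [hmem]
    · have : lam.rowLen (i+1) ≤ lam.rowLen i := rowLen_le lam (Nat.le_succ i)
      omega
    · have : μ.rowLen (i+1) ≤ μ.rowLen i := rowLen_le μ (Nat.le_succ i)
      omega
    · have : lam.rowLen (i+1) ≤ lam.rowLen i := rowLen_le lam (Nat.le_succ i)
      omega
    · have : μ.rowLen (i+1) ≤ μ.rowLen i := rowLen_le μ (Nat.le_succ i)
      omega
  have hrowc' : μ.rowLen c < lam.rowLen c := by
    obtain ⟨j, hj⟩ := hrowc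
    rw [hmem] at hj
    omega
  have hcp1 : lam.rowLen (c + 1) ≤ μ.rowLen c := by
    have := hout (c + 1) (by omega)
    have : μ.rowLen (c + 1) ≤ μ.rowLen c := rowLen_le μ (Nat.le_succ c)
    omega
  have hval : lam.rowLen a + (c - a) = μ.rowLen c + ℓ := by
    have := sdiff_card hac hout hmid hrowc'
    rw [← hsdef, hcard] at this
    omega
  refine ⟨a, c, hac, hout, hmid, hcp1, hrowc', hval, ?_, ?_⟩
  · intro hhor
    obtain ⟨ja, hja⟩ := hrowa
    obtain ⟨jc, hjc⟩ := hrowc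
    exact hhor (a, ja) hja (c, jc) hjc
  · intro hacq
    intro p hp q hq
    obtain ⟨p1, p2⟩ := p
    obtain ⟨q1, q2⟩ := q
    have h1 := hbounds p1 p2 hp
    have h2 := hbounds q1 q2 hq
    simp only
    omega

theorem yd_eq_of_cells_eq {μ ν : YoungDiagram} (h : μ.cells = ν.cells) : μ = ν := by
  ext p
  rw [h]

/-- Synthesis: a numeric non-horizontal hook yields a genuine non-horizontal rim hook. -/
theorem rimhook_of_nhook {ℓ : ℕ} (hl : 1 ≤ ℓ) {lam : YoungDiagram} {a c m : ℕ}
    (hac : a < c) (h1 : lam.rowLen (c + 1) ≤ m) (h2 : m < lam.rowLen c)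
    (h3 : lam.rowLen a + (c - a) = m + ℓ) :
    ∃ s, IsRemovableRimHook ℓ lam s ∧ ¬ HorizontalCells s := by
  have hmono : ∀ {i j : ℕ}, i ≤ j → lam.rowLen j ≤ lam.rowLen i := fun h => rowLen_le lam h
  set h' : ℕ → ℕ := fun i =>
    if i < a then lam.rowLen i else min (lam.rowLen i) (max m (lam.rowLen (i + 1) - 1)) with hh'
  have hle : ∀ i, h' i ≤ lam.rowLen i := by
    intro i
    simp only [hh']
    split_ifs <;> omega
  have hN : ∀ i, lam.colLen 0 ≤ i → h' i = 0 := by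
    intro i hi
    have h0 := rowLen_eventually_zero lam i hi
    have hcN : c < lam.colLen 0 := by
      by_contra hcon
      have := rowLen_eventually_zero lam c (by omega)
      omega
    have hm0 : m ≤ lam.rowLen (c + 1) ∨ True := Or.inr trivial
    have hmi : lam.rowLen (c+1) ≤ m := h1
    have : lam.rowLen i ≤ lam.rowLen (c+1) := hmono (by omega)
    -- i > c, so m ≥ lam i; but also min with lam i = 0 gives 0
    simp only [hh']
    split_ifs <;> omega
  have hmono' : ∀ i, h' (i + 1) ≤ h' i := by
    intro i
    have e1 : lam.rowLen (i + 1) ≤ lam.rowLen i := hmono (by omega)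
    have e2 : lam.rowLen (i + 1 + 1) ≤ lam.rowLen (i + 1) := hmono (by omega)
    simp only [hh']
    split_ifs <;> omega
  obtain ⟨μ, hμ⟩ := exists_diagram h' hmono' (lam.colLen 0) hN
  have hsub : μ.cells ⊆ lam.cells := cells_subset_of_rowLen_le (fun i => by rw [hμ]; exact hle i)
  have hout : ∀ i, i < a ∨ c < i → μ.rowLen i = lam.rowLen i := by
    intro i hi
    rw [hμ]
    rcases hi with hi | hi
    · simp only [hh', if_pos hi]
    · have k1 : lam.rowLen i ≤ lam.rowLen (c + 1) := hmono (by omega)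
      simp only [hh']
      rw [if_neg (by omega)]
      omega
  have hmid : ∀ i, a ≤ i → i < c → μ.rowLen i + 1 = lam.rowLen (i + 1) := by
    intro i hi1 hi2
    rw [hμ]
    have k1 : lam.rowLen c ≤ lam.rowLen (i + 1) := hmono (by omega)
    have k2 : lam.rowLen (i + 1) ≤ lam.rowLen i := hmono (Nat.le_succ i)
    simp only [hh']
    rw [if_neg (by omega)]
    omega
  have hcrow : μ.rowLen c = m := by
    rw [hμ]
    have k1 : lam.rowLen (c + 1) ≤ lam.rowLen c := hmono (Nat.le_succ c)
    simp only [hh']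
    rw [if_neg (by omega)]
    omega
  have hclt : μ.rowLen c < lam.rowLen c := by omega
  set s : Finset (ℕ × ℕ) := lam.cells \ μ.cells with hs
  have hcard : s.card = ℓ := by
    have := sdiff_card (le_of_lt hac) hout hmid hclt
    rw [← hs] at this
    omega
  have hmem : ∀ p : ℕ × ℕ, p ∈ s ↔
      (a ≤ p.1 ∧ p.1 ≤ c ∧ μ.rowLen p.1 ≤ p.2 ∧ p.2 < lam.rowLen p.1) := by
    rintro ⟨i, j⟩
    rw [hs]
    rw [mem_sdiff_cells]
    simp only
    constructor
    · rintro ⟨hj1, hj2⟩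
      have hia : a ≤ i := by
        by_contra hcon
        have := hout i (by omega); omega
      have hic : i ≤ c := by
        by_contra hcon
        have := hout i (by omega); omega
      exact ⟨hia, hic, hj1, hj2⟩
    · rintro ⟨_, _, hj1, hj2⟩
      exact ⟨hj1, hj2⟩
  have hconn : ConnectedCells s := by
    refine strip_connected (lo := μ.rowLen) (hi := lam.rowLen) (le_of_lt hac) hmem ?_
    intro i hi1 hi2
    have k := hmid i hi1 hi2
    exact ⟨rowLen_le μ (Nat.le_succ i), by omega⟩
  have hno2 : No2x2 s := by
    rintro ⟨x, y, hp1, hp2, hp3, hp4⟩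
    rw [hmem] at hp1 hp2 hp3 hp4
    simp only at hp1 hp2 hp3 hp4
    have hxc : x < c := by omega
    have := hmid x (by omega) hxc
    omega
  refine ⟨s, ⟨μ, hsub, hs, hcard, hconn, hno2⟩, ?_⟩
  intro hhor
  have hpa : (a, μ.rowLen a) ∈ s := by
    rw [hmem]
    simp only
    have k1 := hmid a le_rfl hac
    have k2 : lam.rowLen (a+1) ≤ lam.rowLen a := hmono (Nat.le_succ a)
    exact ⟨le_rfl, le_of_lt hac, le_rfl, by omega⟩
  have hpc : (c, m) ∈ s := by
    rw [hmem]
    simp only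
    exact ⟨le_of_lt hac, le_rfl, le_of_eq hcrow, h2⟩
  have := hhor _ hpa _ hpc
  simp only at this
  omega

/-- A horizontal hook removal, numerically. -/
theorem removeHoriz_to_moveN {ℓ : ℕ} (hl : 1 ≤ ℓ) {lam ν : YoungDiagram}
    (h : RemoveHorizHook ℓ lam ν) :
    ∃ i, ℓ + lam.rowLen (i + 1) ≤ lam.rowLen i ∧
      (∀ j, j ≠ i → ν.rowLen j = lam.rowLen j) ∧ ν.rowLen i + ℓ = lam.rowLen i := by
  obtain ⟨s, ⟨μ, hsub, hsdef, hcard, hconn, hno2⟩, hhor, hν⟩ := h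
  obtain ⟨a, c, hac, hout, hmid, hcp1, hclt, hval, hhiff⟩ :=
    hook_analysis hl hsub hsdef hcard hconn hno2
  have hceq : a = c := hhiff.mp hhor
  subst hceq
  have hνμ : ν = μ := by
    apply yd_eq_of_cells_eq
    rw [hν, hsdef, Finset.sdiff_sdiff_eq_self hsub]
  subst hνμ
  refine ⟨a, ?_, ?_, ?_⟩
  · have k1 : ν.rowLen (a + 1) = lam.rowLen (a + 1) := hout _ (by omega)
    have k2 : ν.rowLen (a + 1) ≤ ν.rowLen a := rowLen_le ν (Nat.le_succ a)
    omega
  · intro j hj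
    rcases Nat.lt_or_ge j a with h | h
    · exact hout j (Or.inl h)
    · exact hout j (Or.inr (by omega))
  · omega

theorem moveN_to_removeHoriz {ℓ : ℕ} (hl : 1 ≤ ℓ) {lam ν : YoungDiagram} {i : ℕ}
    (hge : ℓ + lam.rowLen (i + 1) ≤ lam.rowLen i)
    (hrow : ∀ j, j ≠ i → ν.rowLen j = lam.rowLen j) (hi : ν.rowLen i + ℓ = lam.rowLen i) :
    RemoveHorizHook ℓ lam ν := by
  have hle : ∀ j, ν.rowLen j ≤ lam.rowLen j := by
    intro j
    rcases eq_or_ne j i with rfl | hj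
    · omega
    · rw [hrow j hj]
  have hsub : ν.cells ⊆ lam.cells := cells_subset_of_rowLen_le hle
  set s : Finset (ℕ × ℕ) := lam.cells \ ν.cells with hs
  have hout : ∀ j, j < i ∨ i < j → ν.rowLen j = lam.rowLen j := by
    intro j hj
    exact hrow j (by omega)
  have hcard : s.card = ℓ := by
    have := sdiff_card (le_refl i) hout (fun j hj1 hj2 => absurd hj2 (by omega)) (by omega)
    rw [← hs] at this
    omega
  have hmem : ∀ p : ℕ × ℕ, p ∈ s ↔
      (i ≤ p.1 ∧ p.1 ≤ i ∧ ν.rowLen p.1 ≤ p.2 ∧ p.2 < lam.rowLen p.1) := by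
    rintro ⟨x, y⟩
    rw [hs, mem_sdiff_cells]
    simp only
    constructor
    · rintro ⟨hj1, hj2⟩
      have : x = i := by
        by_contra hcon
        have := hrow x hcon; omega
      omega
    · rintro ⟨_, _, hj1, hj2⟩
      exact ⟨hj1, hj2⟩
  have hconn : ConnectedCells s := by
    refine strip_connected (lo := ν.rowLen) (hi := lam.rowLen) (le_refl i) hmem ?_
    intro j hj1 hj2
    omega
  have hno2 : No2x2 s := by
    rintro ⟨x, y, hp1, hp2, _, _⟩
    rw [hmem] at hp1 hp2
    simp only at hp1 hp2
    omega
  refine ⟨s, ⟨ν, hsub, hs, hcard, hconn, hno2⟩, ?_, ?_⟩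
  · intro p hp q hq
    rw [hmem] at hp hq
    omega
  · rw [hs, Finset.sdiff_sdiff_eq_self hsub]

/-! ### Beta numbers -/

def bet (lam : YoungDiagram) (i : ℕ) : ℤ := (lam.rowLen i : ℤ) - i

def IsGap (lam : YoungDiagram) (g : ℤ) : Prop := ∀ i, bet lam i ≠ g

theorem bet_strict {lam : YoungDiagram} {i j : ℕ} (h : i < j) : bet lam j < bet lam i := by
  have := rowLen_le lam (le_of_lt h)
  unfold bet
  omega

theorem bet_le_of_le {lam : YoungDiagram} {i j : ℕ} (h : i ≤ j) : bet lam j ≤ bet lam i := by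
  rcases Nat.eq_or_lt_of_le h with rfl | h
  · exact le_rfl
  · exact le_of_lt (bet_strict h)

theorem exists_bet_le (lam : YoungDiagram) (g : ℤ) : ∃ n, bet lam n ≤ g := by
  refine ⟨lam.colLen 0 + (1 - g).toNat, ?_⟩
  have h0 : lam.rowLen (lam.colLen 0 + (1 - g).toNat) = 0 :=
    rowLen_eventually_zero lam _ (by omega)
  unfold bet
  rw [h0]
  have : (1 - g) ≤ ((1 - g).toNat : ℤ) := Int.self_le_toNat _
  push_cast
  omega

theorem gap_of_window {lam : YoungDiagram} {c m : ℕ}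
    (h1 : lam.rowLen (c + 1) ≤ m) (h2 : m < lam.rowLen c) : IsGap lam ((m : ℤ) - c) := by
  intro i
  rcases le_or_gt i c with h | h
  · have : bet lam c ≤ bet lam i := bet_le_of_le h
    unfold bet at *
    omega
  · have : bet lam i ≤ bet lam (c + 1) := bet_le_of_le (by omega)
    unfold bet at *
    push_cast at *
    omega

theorem gap_to_hook {lam : YoungDiagram} {a : ℕ} {g : ℤ} (hg : IsGap lam g)
    (hlt : g < bet lam a) :
    ∃ c m : ℕ, a ≤ c ∧ lam.rowLen (c + 1) ≤ m ∧ m < lam.rowLen c ∧ (m : ℤ) - c = g := by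
  have hex : ∃ n, bet lam n ≤ g := exists_bet_le lam g
  have hnle : bet lam (Nat.find hex) ≤ g := Nat.find_spec hex
  have hmin : ∀ k, k < Nat.find hex → ¬ bet lam k ≤ g := fun k hk => Nat.find_min hex hk
  have hna : a < Nat.find hex := by
    by_contra hcon
    have : bet lam (Nat.find hex) ≥ bet lam a := bet_le_of_le (by omega)
    omega
  obtain ⟨c, hc⟩ : ∃ c, Nat.find hex = c + 1 := ⟨Nat.find hex - 1, by omega⟩
  rw [hc] at hnle
  have hcg : g < bet lam c := by
    have := hmin c (by omega)
    omega
  have hc1g : bet lam (c + 1) < g := by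
    rcases lt_or_eq_of_le hnle with h | h
    · exact h
    · exact absurd h (hg (c + 1))
  have hge : 0 ≤ g + c := by
    unfold bet at hc1g
    have : (0 : ℤ) ≤ (lam.rowLen (c+1) : ℤ) := by positivity
    push_cast at hc1g
    omega
  refine ⟨c, (g + c).toNat, by omega, ?_, ?_, ?_⟩
  · unfold bet at hc1g
    have := Int.toNat_of_nonneg hge
    push_cast at *
    omega
  · unfold bet at hcg
    have := Int.toNat_of_nonneg hge
    push_cast at *
    omega
  · have := Int.toNat_of_nonneg hge
    omega

theorem val_cast {lam : YoungDiagram} {a c : ℕ} (h : a ≤ c) :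
    ((lam.rowLen a + (c - a) : ℕ) : ℤ) = bet lam a + c := by
  unfold bet
  push_cast [Nat.cast_sub h]
  ring

/-- Numeric core condition. -/
def CoreN (ℓ : ℕ) (lam : YoungDiagram) : Prop :=
  ¬ ∃ a c m k : ℕ, a ≤ c ∧ lam.rowLen (c + 1) ≤ m ∧ m < lam.rowLen c ∧
    lam.rowLen a + (c - a) = m + ℓ * (k + 1)

theorem colLen_window {lam : YoungDiagram} {c m : ℕ}
    (h1 : lam.rowLen (c + 1) ≤ m) (h2 : m < lam.rowLen c) : lam.colLen m = c + 1 := by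
  have hmem : (c, m) ∈ lam := YoungDiagram.mem_iff_lt_rowLen.mpr h2
  have hnot : (c + 1, m) ∉ lam := by
    rw [YoungDiagram.mem_iff_lt_rowLen]
    omega
  rw [YoungDiagram.mem_iff_lt_colLen] at hmem hnot
  omega

theorem isCore_iff_coreN {ℓ : ℕ} (hl : 1 ≤ ℓ) (lam : YoungDiagram) :
    IsCore ℓ lam ↔ CoreN ℓ lam := by
  constructor
  · intro hcore
    rintro ⟨a, c, m, k, hac, h1, h2, h3⟩
    have hmem : (a, m) ∈ lam := by
      rw [YoungDiagram.mem_iff_lt_rowLen]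
      have : lam.rowLen c ≤ lam.rowLen a := rowLen_le lam hac
      omega
    refine hcore a m hmem ⟨k + 1, ?_⟩
    unfold hookLen
    rw [colLen_window h1 h2]
    have : lam.rowLen c ≤ lam.rowLen a := rowLen_le lam hac
    omega
  · intro hcoren a b hmem hdvd
    have hb : b < lam.rowLen a := YoungDiagram.mem_iff_lt_rowLen.mp hmem
    have hcol : a < lam.colLen b := YoungDiagram.mem_iff_lt_colLen.mp hmem
    obtain ⟨c, hc⟩ : ∃ c, lam.colLen b = c + 1 := ⟨lam.colLen b - 1, by omega⟩
    have hcb : b < lam.rowLen c := by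
      rw [← YoungDiagram.mem_iff_lt_rowLen, YoungDiagram.mem_iff_lt_colLen]
      omega
    have hcb1 : lam.rowLen (c + 1) ≤ b := by
      by_contra hcon
      have : (c + 1, b) ∈ lam := YoungDiagram.mem_iff_lt_rowLen.mpr (by omega)
      rw [YoungDiagram.mem_iff_lt_colLen] at this
      omega
    have hac : a ≤ c := by omega
    have hhook : hookLen lam a b = lam.rowLen a + (c - a) - b := by
      unfold hookLen
      rw [hc]
      have : lam.rowLen c ≤ lam.rowLen a := rowLen_le lam hac
      omega
    obtain ⟨q, hq⟩ := hdvd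
    have hpos : 1 ≤ hookLen lam a b := by
      rw [hhook]
      have : lam.rowLen c ≤ lam.rowLen a := rowLen_le lam hac
      omega
    have hq1 : 1 ≤ q := by
      rcases Nat.eq_zero_or_pos q with rfl | h
      · omega
      · exact h
    refine hcoren ⟨a, c, b, q - 1, hac, hcb1, hcb, ?_⟩
    have : lam.rowLen c ≤ lam.rowLen a := rowLen_le lam hac
    have : ℓ * q = ℓ * (q - 1 + 1) := by
      congr 1
      omega
    omega

/-- Any hook of length divisible by ℓ yields a hook of length exactly ℓ. -/
theorem exact_hook_of_div {ℓ : ℕ} (hl : 1 ≤ ℓ) {lam : YoungDiagram}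
    (hfree : ¬ ∃ a c m : ℕ, a ≤ c ∧ lam.rowLen (c + 1) ≤ m ∧ m < lam.rowLen c ∧
      lam.rowLen a + (c - a) = m + ℓ) : CoreN ℓ lam := by
  rintro ⟨a, c, m, k, hac, h1, h2, h3⟩
  -- strong induction on k
  induction k using Nat.strong_induction_on generalizing a c m with
  | _ k ih =>
    rcases Nat.eq_zero_or_pos k with rfl | hk
    · exact hfree ⟨a, c, m, hac, h1, h2, by omega⟩
    · -- consider the position g + ℓ
      have hgap : IsGap lam ((m : ℤ) - c) := gap_of_window h1 h2
      have h3' : ((lam.rowLen a + (c - a) : ℕ) : ℤ) = ((m + ℓ * (k + 1) : ℕ) : ℤ) :=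
        congrArg _ h3
      rw [val_cast hac, Nat.cast_add] at h3'
      have hbeta : bet lam a - ((m : ℤ) - c) = ((ℓ * (k + 1) : ℕ) : ℤ) := by omega
      by_cases hbead : ∃ j, bet lam j = (m : ℤ) - c + ℓ
      · obtain ⟨j, hj⟩ := hbead
        -- hook from row j over the gap g, of size exactly ℓ
        have hlpos : (0 : ℤ) < (ℓ : ℤ) := by exact_mod_cast hl
        have hjg : ((m : ℤ) - c) < bet lam j := by omega
        obtain ⟨c', m', hjc', hh1, hh2, hh3⟩ := gap_to_hook hgap hjg
        refine hfree ⟨j, c', m', hjc', hh1, hh2, ?_⟩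
        have hvc := val_cast (lam := lam) hjc'
        omega
      · push_neg at hbead
        have hgap' : IsGap lam ((m : ℤ) - c + ℓ) := hbead
        have h2l : ℓ * 2 ≤ ℓ * (k + 1) := Nat.mul_le_mul_left ℓ (by omega)
        have h2lc : ((ℓ * 2 : ℕ) : ℤ) = 2 * (ℓ : ℤ) := by push_cast; ring
        have h2lc' : ((ℓ * 2 : ℕ) : ℤ) ≤ ((ℓ * (k + 1) : ℕ) : ℤ) := by exact_mod_cast h2l
        have hlt' : ((m : ℤ) - c + ℓ) < bet lam a := by
          have hlpos : (0 : ℤ) < (ℓ : ℤ) := by exact_mod_cast hl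
          omega
        obtain ⟨c', m', hac', hh1, hh2, hh3⟩ := gap_to_hook hgap' hlt'
        refine ih (k - 1) (by omega) a c' m' hac' hh1 hh2 ?_
        have hvc := val_cast (lam := lam) hac'
        have hkk : k - 1 + 1 = k := by omega
        rw [hkk]
        have hsplit : ℓ * (k + 1) = ℓ * k + ℓ := by ring
        omega

/-! ### Numeric non-horizontal hook condition and decompositions -/

def NHgoodN (ℓ : ℕ) (lam : YoungDiagram) : Prop :=
  ¬ ∃ a c m : ℕ, a < c ∧ lam.rowLen (c + 1) ≤ m ∧ m < lam.rowLen c ∧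
    lam.rowLen a + (c - a) = m + ℓ

theorem nhookN_of_rimhook_nonhoriz {ℓ : ℕ} (hl : 1 ≤ ℓ) {lam : YoungDiagram} {s : Finset (ℕ × ℕ)}
    (hs : IsRemovableRimHook ℓ lam s) (hnh : ¬ HorizontalCells s) :
    ∃ a c m : ℕ, a < c ∧ lam.rowLen (c + 1) ≤ m ∧ m < lam.rowLen c ∧
      lam.rowLen a + (c - a) = m + ℓ := by
  obtain ⟨μ, hsub, hsdef, hcard, hconn, hno2⟩ := hs
  obtain ⟨a, c, hac, hout, hmid, hcp1, hclt, hval, hhiff⟩ :=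
    hook_analysis hl hsub hsdef hcard hconn hno2
  have : a ≠ c := fun h => hnh (hhiff.mpr h)
  exact ⟨a, c, μ.rowLen c, by omega, hcp1, hclt, hval⟩

theorem core_diff_le {ℓ : ℕ} (hl : 1 ≤ ℓ) {μ : YoungDiagram} (hc : CoreN ℓ μ) (j : ℕ) :
    μ.rowLen j < μ.rowLen (j + 1) + ℓ := by
  by_contra hcon
  push_neg at hcon
  exact hc ⟨j, j, μ.rowLen j - ℓ, 0, le_rfl, by omega,
    by
      have : μ.rowLen (j + 1) ≤ μ.rowLen j := rowLen_le μ (by omega)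
      omega,
    by omega⟩

theorem regular_of_NHgoodN {ℓ : ℕ} (hl : 2 ≤ ℓ) {lam : YoungDiagram}
    (h : NHgoodN ℓ lam) : Regular ℓ lam := by
  intro i heq
  by_contra hpos
  have hv : 0 < lam.rowLen i := by omega
  set v := lam.rowLen i with hvdef
  have hex : ∃ j, lam.rowLen j < v := by
    refine ⟨lam.colLen 0, ?_⟩
    rw [rowLen_eventually_zero lam _ le_rfl]
    omega
  have hfind := Nat.find_spec hex
  have hmin : ∀ k, k < Nat.find hex → v ≤ lam.rowLen k := by
    intro k hk
    have := Nat.find_min hex hk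
    omega
  have hn : i + ℓ ≤ Nat.find hex := by
    by_contra hcon
    push_neg at hcon
    have h1 : lam.rowLen (Nat.find hex) ≥ lam.rowLen (i + ℓ - 1) := rowLen_le lam (by omega)
    omega
  obtain ⟨c, hcn⟩ : ∃ c, Nat.find hex = c + 1 := ⟨Nat.find hex - 1, by omega⟩
  apply h
  refine ⟨c + 1 - ℓ, c, v - 1, by omega, ?_, ?_, ?_⟩
  · rw [← hcn]; omega
  · have := hmin c (by omega)
    omega
  · have hva : lam.rowLen (c + 1 - ℓ) = v := by
      have h1 := hmin (c + 1 - ℓ) (by omega)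
      have h2 : lam.rowLen (c + 1 - ℓ) ≤ lam.rowLen i := rowLen_le lam (by omega)
      omega
    rw [hva]
    omega

theorem NHgoodN_of_decomp {ℓ : ℕ} (hl : 2 ≤ ℓ) {μ : YoungDiagram} {r : ℕ} {κ : ℕ → ℕ}
    {lam : YoungDiagram} (hd : Decomp ℓ μ r κ lam) : NHgoodN ℓ lam := by
  obtain ⟨hcore, hne, hanti, hz, heq, htail⟩ := hd
  have hcore' : CoreN ℓ μ := (isCore_iff_coreN (by omega) μ).mp hcore
  have hd1 : μ.rowLen 0 < μ.rowLen 1 + ℓ := by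
    have := core_diff_le (by omega) hcore' 0
    simpa using this
  have hμ01 : μ.rowLen 1 ≤ μ.rowLen 0 := rowLen_le μ (by omega)
  have hwin : μ.rowLen 0 + 1 < μ.rowLen 1 + ℓ := by
    rcases Nat.lt_or_ge (μ.rowLen 0 + 1) (μ.rowLen 1 + ℓ) with h | h
    · exact h
    · exfalso; apply hne; omega
  rintro ⟨a, c, m, hac, h1, h2, h3⟩
  rcases Nat.lt_trichotomy a r with har | har | har
  · -- a < r : big descent in pattern rows
    have ha := heq a (by omega)
    have ha1 := heq (a + 1) (by omega)
    have hk : κ (a + 1) ≤ κ a := hanti (Nat.le_succ a)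
    have hkm : ℓ * κ (a + 1) ≤ ℓ * κ a := Nat.mul_le_mul_left ℓ hk
    have hsplit : (r - a) * (ℓ - 1) = (r - (a + 1)) * (ℓ - 1) + (ℓ - 1) := by
      have : r - a = (r - (a + 1)) + 1 := by omega
      rw [this, Nat.succ_mul]
    have hdrop : lam.rowLen (a + 1) + (ℓ - 1) ≤ lam.rowLen a := by
      rw [ha, ha1, hsplit]
      omega
    have hlec : lam.rowLen c ≤ lam.rowLen (a + 1) := rowLen_le lam (by omega)
    omega
  · subst har
    have ha := heq a le_rfl
    rw [Nat.sub_self, Nat.zero_mul] at ha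
    rcases Nat.eq_zero_or_pos (κ a) with hk0 | hk1
    · -- κ_r = 0 : transfer hook to the core
      rw [hk0, Nat.mul_zero] at ha
      apply hcore'
      refine ⟨0, c - a, m, 0, by omega, ?_, ?_, ?_⟩
      · have := htail (c - a + 1) (by omega)
        rw [show a + (c - a + 1) = c + 1 by omega] at this
        omega
      · have := htail (c - a) (by omega)
        rw [show a + (c - a) = c by omega] at this
        omega
      · omega
    · -- κ_r ≥ 1
      have hmul : ℓ * 1 ≤ ℓ * κ a := Nat.mul_le_mul_left ℓ hk1
      have hlc : lam.rowLen c = μ.rowLen (c - a) := by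
        have := htail (c - a) (by omega)
        rw [show a + (c - a) = c by omega] at this
        omega
      have : μ.rowLen (c - a) ≤ μ.rowLen 0 := rowLen_le μ (by omega)
      omega
  · -- a > r : hook entirely inside the core
    apply hcore'
    have hta := htail (a - r) (by omega)
    have htc := htail (c - r) (by omega)
    have htc1 := htail (c - r + 1) (by omega)
    rw [show r + (a - r) = a by omega] at hta
    rw [show r + (c - r) = c by omega] at htc
    rw [show r + (c - r + 1) = c + 1 by omega] at htc1
    refine ⟨a - r, c - r, m, 0, by omega, by omega, by omega, ?_⟩
    rw [← hta]
    omega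

theorem decomp_move {ℓ : ℕ} (hl : 2 ≤ ℓ) {μ : YoungDiagram} {r : ℕ} {κ : ℕ → ℕ}
    {lam ν : YoungDiagram} (hd : Decomp ℓ μ r κ lam) (i : ℕ)
    (hge : ℓ + lam.rowLen (i + 1) ≤ lam.rowLen i)
    (hrow : ∀ j, j ≠ i → ν.rowLen j = lam.rowLen j) (hi : ν.rowLen i + ℓ = lam.rowLen i) :
    Decomp ℓ μ r (fun j => if j = i then κ j - 1 else κ j) ν := by
  obtain ⟨hcore, hne, hanti, hz, heq, htail⟩ := hd
  have hcore' : CoreN ℓ μ := (isCore_iff_coreN (by omega) μ).mp hcore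
  -- i ≤ r
  have hir : i ≤ r := by
    by_contra hcon
    push_neg at hcon
    have h1 := htail (i - r) (by omega)
    have h2 := htail (i - r + 1) (by omega)
    rw [show r + (i - r) = i by omega] at h1
    rw [show r + (i - r + 1) = i + 1 by omega] at h2
    have := core_diff_le (by omega) hcore' (i - r)
    omega
  -- κ i ≥ κ (i+1) + 1 when i < r, κ r ≥ 1 when i = r
  have hki : 1 ≤ κ i := by
    rcases Nat.eq_or_lt_of_le hir with hir' | hir'
    · subst hir'
      by_contra hcon
      have hk0 : κ i = 0 := by omega
      have ha := heq i le_rfl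
      rw [Nat.sub_self, Nat.zero_mul, hk0, Nat.mul_zero] at ha
      have h2 := htail 1 le_rfl
      have h3 : μ.rowLen 0 < μ.rowLen 1 + ℓ := by
        have := core_diff_le (by omega) hcore' 0
        simpa using this
      omega
    · by_contra hcon
      have hk0 : κ i = 0 := by omega
      have hk1 : κ (i + 1) = 0 := by
        have hmono1 : κ (i + 1) ≤ κ i := hanti (by omega : i ≤ i + 1)
        omega
      have ha := heq i (by omega)
      have ha1 := heq (i + 1) (by omega)
      rw [hk0, Nat.mul_zero] at ha
      rw [hk1, Nat.mul_zero] at ha1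
      have hsplit : (r - i) * (ℓ - 1) = (r - (i + 1)) * (ℓ - 1) + (ℓ - 1) := by
        have : r - i = (r - (i + 1)) + 1 := by omega
        rw [this, Nat.succ_mul]
      omega
  have hstep : i < r → κ (i + 1) + 1 ≤ κ i := by
    intro hir'
    by_contra hcon
    push_neg at hcon
    have hk : κ i ≤ κ (i + 1) := by omega
    have hkm : ℓ * κ i ≤ ℓ * κ (i + 1) := Nat.mul_le_mul_left ℓ hk
    have ha := heq i (by omega)
    have ha1 := heq (i + 1) (by omega)
    have hsplit : (r - i) * (ℓ - 1) = (r - (i + 1)) * (ℓ - 1) + (ℓ - 1) := by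
      have : r - i = (r - (i + 1)) + 1 := by omega
      rw [this, Nat.succ_mul]
    omega
  have hmulsplit : ℓ * κ i = ℓ * (κ i - 1) + ℓ := by
    obtain ⟨t, ht⟩ : ∃ t, κ i = t + 1 := ⟨κ i - 1, by omega⟩
    rw [ht, Nat.add_sub_cancel, Nat.mul_succ]
  refine ⟨hcore, hne, ?_, ?_, ?_, ?_⟩
  · apply antitone_nat_of_succ_le
    intro j
    rcases eq_or_ne j i with rfl | hj
    · rcases eq_or_ne (j + 1) j with h | h
      · omega
      · simp only [if_neg h, eq_self_iff_true, ite_true]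
        rcases Nat.eq_or_lt_of_le hir with hir' | hir'
        · have := hz (j + 1) (by omega)
          omega
        · have := hstep hir'
          omega
    · rcases eq_or_ne (j + 1) i with h | h
      · simp only [if_pos h, eq_self_iff_true, ite_true, if_neg hj]
        have h2 : κ (j + 1) ≤ κ j := hanti (by omega : j ≤ j + 1)
        omega
      · simp only [if_neg h, if_neg hj]
        exact hanti (by omega : j ≤ j + 1)
  · intro j hj
    have : j ≠ i := by omega
    simp only [if_neg this]
    exact hz j hj
  · intro j hj
    rcases eq_or_ne j i with rfl | hjne
    · simp only [eq_self_iff_true, ite_true]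
      have ha := heq j hj
      omega
    · simp only [if_neg hjne]
      rw [hrow j hjne]
      exact heq j hj
  · intro j hj
    have : r + j ≠ i := by omega
    rw [hrow _ this]
    exact htail j hj

/-- Everything reachable from a decomposable diagram is decomposable (same core and r). -/
theorem decomp_reach {ℓ : ℕ} (hl : 2 ≤ ℓ) {μ : YoungDiagram} {r : ℕ} {κ : ℕ → ℕ}
    {lam ν : YoungDiagram} (hd : Decomp ℓ μ r κ lam)
    (hreach : Relation.ReflTransGen (RemoveHorizHook ℓ) lam ν) :
    ∃ κ', Decomp ℓ μ r κ' ν := by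
  induction hreach with
  | refl => exact ⟨κ, hd⟩
  | tail hab hbc ih =>
    obtain ⟨κ', hd'⟩ := ih
    obtain ⟨i, hge, hrow, hi⟩ := removeHoriz_to_moveN (by omega) hbc
    exact ⟨_, decomp_move hl hd' i hge hrow hi⟩

/-- A decomposable diagram is an ℓ-partition. -/
theorem ellp_of_decomp {ℓ : ℕ} (hl : 2 ≤ ℓ) {μ : YoungDiagram} {r : ℕ} {κ : ℕ → ℕ}
    {lam : YoungDiagram} (hd : Decomp ℓ μ r κ lam) : IsEllPartition ℓ lam := by
  constructor
  · exact regular_of_NHgoodN hl (NHgoodN_of_decomp hl hd)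
  · intro ν hreach s hs
    by_contra hnh
    obtain ⟨κ', hd'⟩ := decomp_reach hl hd hreach
    exact NHgoodN_of_decomp hl hd' (nhookN_of_rimhook_nonhoriz (by omega) hs hnh)

/-! ### Uniqueness of decompositions -/

theorem decomp_diff_pattern {ℓ : ℕ} (hl : 2 ≤ ℓ) {μ : YoungDiagram} {r : ℕ} {κ : ℕ → ℕ}
    {lam : YoungDiagram} (hd : Decomp ℓ μ r κ lam) :
    (∀ j, j < r → lam.rowLen j = lam.rowLen (j + 1) + (ℓ - 1) + ℓ * (κ j - κ (j + 1))) ∧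
    lam.rowLen r = lam.rowLen (r + 1) + (μ.rowLen 0 - μ.rowLen 1) + ℓ * κ r ∧
    μ.rowLen 0 - μ.rowLen 1 ≤ ℓ - 2 := by
  obtain ⟨hcore, hne, hanti, hz, heq, htail⟩ := hd
  have hcore' : CoreN ℓ μ := (isCore_iff_coreN (by omega) μ).mp hcore
  have hwin : μ.rowLen 0 < μ.rowLen 1 + ℓ := by
    have := core_diff_le (by omega) hcore' 0
    simpa using this
  have hμ01 : μ.rowLen 1 ≤ μ.rowLen 0 := rowLen_le μ (by omega)
  refine ⟨?_, ?_, by omega⟩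
  · intro j hj
    have ha := heq j (by omega)
    have ha1 := heq (j + 1) (by omega)
    have hk : κ (j + 1) ≤ κ j := hanti (by omega : j ≤ j + 1)
    obtain ⟨e, he⟩ : ∃ e, κ j = κ (j + 1) + e := ⟨κ j - κ (j + 1), by omega⟩
    rw [he, Nat.mul_add] at ha
    rw [he, Nat.add_sub_cancel_left]
    have hsplit : (r - j) * (ℓ - 1) = (r - (j + 1)) * (ℓ - 1) + (ℓ - 1) := by
      have : r - j = (r - (j + 1)) + 1 := by omega
      rw [this, Nat.succ_mul]
    omega
  · have ha := heq r le_rfl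
    rw [Nat.sub_self, Nat.zero_mul] at ha
    have ht := htail 1 le_rfl
    omega

theorem decomp_unique {ℓ : ℕ} (hl : 2 ≤ ℓ) {lam μ μ' : YoungDiagram}
    {r r' : ℕ} {κ κ' : ℕ → ℕ} (h : Decomp ℓ μ r κ lam) (h' : Decomp ℓ μ' r' κ' lam) :
    μ = μ' ∧ r = r' ∧ κ = κ' := by
  obtain ⟨hp, hr, hw⟩ := decomp_diff_pattern hl h
  obtain ⟨hp', hr', hw'⟩ := decomp_diff_pattern hl h'
  -- the r's agree
  have hrr : r = r' := by
    rcases Nat.lt_trichotomy r r' with hlt | he | hlt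
    · exfalso
      have h1 := hp' r hlt
      -- lam r - lam (r+1) has two shapes
      obtain ⟨t, ht⟩ : ∃ t, (κ' r - κ' (r + 1)) = t := ⟨_, rfl⟩
      rw [ht] at h1
      -- from hr : lam r = lam (r+1) + w + ℓ κ r, with w ≤ ℓ-2
      -- from h1 : lam r = lam (r+1) + (ℓ-1) + ℓ t
      -- so w + ℓ κ r = ℓ - 1 + ℓ t, i.e. w ≡ ℓ-1 mod ℓ with 0 ≤ w ≤ ℓ-2 : contradiction
      rcases Nat.le_total (κ r) t with hle | hle
      · obtain ⟨u, hu⟩ : ∃ u, t = κ r + u := ⟨t - κ r, by omega⟩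
        rw [hu, Nat.mul_add] at h1
        have : (μ.rowLen 0 - μ.rowLen 1) = (ℓ - 1) + ℓ * u := by omega
        have : ℓ * u ≤ ℓ - 2 := by omega
        omega
      · obtain ⟨u, hu⟩ : ∃ u, κ r = t + u := ⟨κ r - t, by omega⟩
        rw [hu, Nat.mul_add] at hr
        have h2 : (μ.rowLen 0 - μ.rowLen 1) + ℓ * u = ℓ - 1 := by omega
        have h3 : ℓ * u ≤ ℓ - 1 := by omega
        have h4 : u = 0 := by
          by_contra hcon
          have : ℓ * 1 ≤ ℓ * u := Nat.mul_le_mul_left ℓ (by omega)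
          omega
        rw [h4, Nat.mul_zero] at h2
        omega
    · exact he
    · exfalso
      have h1 := hp r' hlt
      obtain ⟨t, ht⟩ : ∃ t, (κ r' - κ (r' + 1)) = t := ⟨_, rfl⟩
      rw [ht] at h1
      rcases Nat.le_total (κ' r') t with hle | hle
      · obtain ⟨u, hu⟩ : ∃ u, t = κ' r' + u := ⟨t - κ' r', by omega⟩
        rw [hu, Nat.mul_add] at h1
        have : (μ'.rowLen 0 - μ'.rowLen 1) = (ℓ - 1) + ℓ * u := by omega
        have : ℓ * u ≤ ℓ - 2 := by omega
        omega
      · obtain ⟨u, hu⟩ : ∃ u, κ' r' = t + u := ⟨κ' r' - t, by omega⟩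
        rw [hu, Nat.mul_add] at hr'
        have h2 : (μ'.rowLen 0 - μ'.rowLen 1) + ℓ * u = ℓ - 1 := by omega
        have h4 : u = 0 := by
          by_contra hcon
          have : ℓ * 1 ≤ ℓ * u := Nat.mul_le_mul_left ℓ (by omega)
          omega
        rw [h4, Nat.mul_zero] at h2
        omega
  subst hrr
  obtain ⟨hcore, hne, hanti, hz, heq, htail⟩ := h
  obtain ⟨hcore2, hne2, hanti2, hz2, heq2, htail2⟩ := h'
  -- tails agree
  have htails : ∀ i, 1 ≤ i → μ.rowLen i = μ'.rowLen i := by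
    intro i hi
    rw [← htail i hi, ← htail2 i hi]
  -- top rows agree
  have htop : μ.rowLen 0 = μ'.rowLen 0 := by
    have e1 := heq r le_rfl
    have e2 := heq2 r le_rfl
    rw [Nat.sub_self, Nat.zero_mul] at e1 e2
    have e3 := htails 1 le_rfl
    have m1 : μ.rowLen 1 ≤ μ.rowLen 0 := rowLen_le μ (by omega)
    have m2 : μ'.rowLen 1 ≤ μ'.rowLen 0 := rowLen_le μ' (by omega)
    rcases Nat.le_total (μ.rowLen 0) (μ'.rowLen 0) with hle | hle
    · -- μ'₀ - μ₀ = ℓ (κ r - κ' r) and < ℓ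
      have hk : ℓ * κ' r ≤ ℓ * κ r := by omega
      have hkk : κ' r ≤ κ r := Nat.le_of_mul_le_mul_left hk (by omega)
      obtain ⟨u, hu⟩ : ∃ u, κ r = κ' r + u := ⟨κ r - κ' r, by omega⟩
      rw [hu, Nat.mul_add] at e1
      have hu0 : u = 0 := by
        by_contra hcon
        have : ℓ * 1 ≤ ℓ * u := Nat.mul_le_mul_left ℓ (by omega)
        omega
      rw [hu0, Nat.mul_zero] at e1
      omega
    · have hk : ℓ * κ r ≤ ℓ * κ' r := by omega
      have hkk : κ r ≤ κ' r := Nat.le_of_mul_le_mul_left hk (by omega)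
      obtain ⟨u, hu⟩ : ∃ u, κ' r = κ r + u := ⟨κ' r - κ r, by omega⟩
      rw [hu, Nat.mul_add] at e2
      have hu0 : u = 0 := by
        by_contra hcon
        have : ℓ * 1 ≤ ℓ * u := Nat.mul_le_mul_left ℓ (by omega)
        omega
      rw [hu0, Nat.mul_zero] at e2
      omega
  have hμ : μ = μ' := by
    apply yd_ext
    intro i
    rcases Nat.eq_zero_or_pos i with rfl | hi
    · exact htop
    · exact htails i hi
  refine ⟨hμ, rfl, ?_⟩
  funext i
  rcases le_or_gt i r with hir | hir
  · have e1 := heq i hir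
    have e2 := heq2 i hir
    rw [← hμ] at e2
    have : ℓ * κ i = ℓ * κ' i := by omega
    exact Nat.eq_of_mul_eq_mul_left (by omega) this
  · rw [hz i (by omega), hz2 i (by omega)]

/-! ### Existence: core case -/

theorem exists_decomp_of_coreN {ℓ : ℕ} (hl : 2 ≤ ℓ) {lam : YoungDiagram}
    (hcore : CoreN ℓ lam) : ∃ μ r κ, Decomp ℓ μ r κ lam := by
  have hex : ∃ j, lam.rowLen j ≠ lam.rowLen (j + 1) + (ℓ - 1) := by
    refine ⟨lam.colLen 0, ?_⟩
    rw [rowLen_eventually_zero lam _ le_rfl, rowLen_eventually_zero lam _ (by omega)]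
    omega
  set r := Nat.find hex with hrdef
  have hfr : lam.rowLen r ≠ lam.rowLen (r + 1) + (ℓ - 1) := Nat.find_spec hex
  have hmin : ∀ j, j < r → lam.rowLen j = lam.rowLen (j + 1) + (ℓ - 1) := by
    intro j hj
    have := Nat.find_min hex hj
    omega
  obtain ⟨μ, hμ⟩ := exists_diagram (fun i => lam.rowLen (r + i))
    (fun i => rowLen_le lam (by omega)) (lam.colLen 0)
    (fun i hi => rowLen_eventually_zero lam _ (by omega))
  refine ⟨μ, r, fun _ => 0, ?_, ?_, antitone_const, fun _ _ => rfl, ?_, ?_⟩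
  · rw [isCore_iff_coreN (by omega)]
    rintro ⟨a, c, m, k, hac, h1, h2, h3⟩
    rw [hμ] at h1 h2 h3
    refine hcore ⟨r + a, r + c, m, k, by omega, ?_, ?_, ?_⟩
    · exact h1
    · exact h2
    · omega
  · rw [hμ, hμ]
    have h5 : lam.rowLen (r + 1) ≤ lam.rowLen r := rowLen_le lam (by omega)
    have h6 : lam.rowLen (r + 0) = lam.rowLen r := by norm_num
    omega
  · intro i hi
    rw [hμ, Nat.mul_zero, Nat.add_zero]
    have h6 : lam.rowLen (r + 0) = lam.rowLen r := by norm_num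
    -- downward telescope
    have key : ∀ d, d ≤ r → lam.rowLen (r - d) = lam.rowLen r + d * (ℓ - 1) := by
      intro d
      induction d with
      | zero => intro _; simp
      | succ d ih =>
        intro hd
        have h1 := hmin (r - (d + 1)) (by omega)
        rw [show r - (d + 1) + 1 = r - d by omega] at h1
        rw [h1, ih (by omega), Nat.succ_mul]
        omega
    have := key (r - i) (by omega)
    rw [show r - (r - i) = i by omega] at this
    omega
  · intro i _
    rw [hμ]

/-! ### Lemma F: a raised row above the core top forces a non-horizontal hook -/

theorem lemmaF {ℓ : ℕ} (hl : 2 ≤ ℓ) : ∀ (k : ℕ) (ν : YoungDiagram) (R A B : ℕ),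
    1 ≤ k → ν.rowLen R = A + ℓ * k → ν.rowLen (R + 1) = B + ℓ → ν.rowLen (R + 2) ≤ B →
    B ≤ A → A + 2 ≤ B + ℓ →
    ∃ σ, Relation.ReflTransGen (RemoveHorizHook ℓ) ν σ ∧
      ∃ a c m : ℕ, a < c ∧ σ.rowLen (c + 1) ≤ m ∧ m < σ.rowLen c ∧
        σ.rowLen a + (c - a) = m + ℓ := by
  intro k
  induction k with
  | zero => intro ν R A B h1; omega
  | succ k ih =>
    intro ν R A B _ hR hR1 hR2 hBA hwin
    rcases Nat.eq_zero_or_pos k with rfl | hk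
    · -- k = 1 : a non-horizontal hook exists already
      refine ⟨ν, Relation.ReflTransGen.refl, R, R + 1, A + 1, by omega, ?_, ?_, ?_⟩
      · rw [show R + 1 + 1 = R + 2 by omega]
        omega
      · omega
      · rw [hR]
        omega
    · -- k ≥ 1 (bead can move down ℓ); remove a horizontal hook from row R
      have hmul : ℓ * (k + 1) = ℓ * k + ℓ := by rw [Nat.mul_succ]
      have hmul2 : ℓ * 1 ≤ ℓ * k := Nat.mul_le_mul_left ℓ hk
      obtain ⟨ν₂, hν₂⟩ := exists_diagram (fun j => if j = R then A + ℓ * k else ν.rowLen j)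
        (by
          intro j
          have e1 : ν.rowLen (j + 1) ≤ ν.rowLen j := rowLen_le ν (by omega)
          rcases eq_or_ne j R with rfl | hj
          · simp only [eq_self_iff_true, ite_true, if_neg (by omega : ¬ j + 1 = j)]
            omega
          · rcases eq_or_ne (j + 1) R with h | h
            · simp only [if_pos h, if_neg hj]
              have h2 : ν.rowLen R ≤ ν.rowLen j := rowLen_le ν (by omega)
              omega
            · simp only [if_neg h, if_neg hj]
              omega)
        (ν.colLen 0)
        (by
          intro j hj
          have h0 := rowLen_eventually_zero ν j hj
          have hRcol : R < ν.colLen 0 := by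
            by_contra hcon
            have := rowLen_eventually_zero ν R (by omega)
            omega
          simp only [if_neg (show ¬ j = R by omega)]
          exact h0)
      have hν₂' : ∀ i, ν₂.rowLen i = if i = R then A + ℓ * k else ν.rowLen i := hν₂
      have hmove : RemoveHorizHook ℓ ν ν₂ := by
        refine moveN_to_removeHoriz (by omega) (i := R) (by omega) ?_ ?_
        · intro j hj
          rw [hν₂', if_neg hj]
        · rw [hν₂', if_pos rfl]
          omega
      obtain ⟨σ, hreach, hwit⟩ := ih ν₂ R A B hk
        (by rw [hν₂', if_pos rfl])
        (by rw [hν₂', if_neg (by omega)]; exact hR1)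
        (by rw [hν₂', if_neg (by omega)]; exact hR2)
        hBA hwin
      exact ⟨σ, Relation.ReflTransGen.head hmove hreach, hwit⟩

/-! ### Existence for ℓ-partitions -/

theorem exists_decomp_of_ellp {ℓ : ℕ} (hl : 2 ≤ ℓ) :
    ∀ n (lam : YoungDiagram), lam.cells.card ≤ n → IsEllPartition ℓ lam →
    ∃ μ r κ, Decomp ℓ μ r κ lam := by
  intro n
  induction n with
  | zero =>
    intro lam hcard _
    by_cases hex : ∃ a c m : ℕ, a ≤ c ∧ lam.rowLen (c + 1) ≤ m ∧ m < lam.rowLen c ∧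
        lam.rowLen a + (c - a) = m + ℓ
    · exfalso
      obtain ⟨a, c, m, hac, h1, h2, h3⟩ := hex
      have hmem : (c, m) ∈ lam := YoungDiagram.mem_iff_lt_rowLen.mpr h2
      have : 0 < lam.cells.card :=
        Finset.card_pos.mpr ⟨(c, m), (YoungDiagram.mem_cells _).mpr hmem⟩
      omega
    · exact exists_decomp_of_coreN hl (exact_hook_of_div (by omega) hex)
  | succ n ih =>
    intro lam hcard hellp
    have hnhgood : ∀ ρ, Relation.ReflTransGen (RemoveHorizHook ℓ) lam ρ → NHgoodN ℓ ρ := by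
      rintro ρ hr ⟨a', c', m', hac', h1', h2', h3'⟩
      obtain ⟨s, hs, hnh⟩ := rimhook_of_nhook (by omega) hac' h1' h2' h3'
      exact hnh (hellp.2 ρ hr s hs)
    by_cases hex : ∃ a c m : ℕ, a ≤ c ∧ lam.rowLen (c + 1) ≤ m ∧ m < lam.rowLen c ∧
        lam.rowLen a + (c - a) = m + ℓ
    · obtain ⟨a, c, m, hac, h1, h2, h3⟩ := hex
      have hceq : a = c := by
        rcases Nat.eq_or_lt_of_le hac with h | h
        · exact h
        · exfalso
          exact hnhgood lam Relation.ReflTransGen.refl ⟨a, c, m, h, h1, h2, h3⟩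
      subst hceq
      -- remove the horizontal hook in row a
      have hval : lam.rowLen a = m + ℓ := by omega
      obtain ⟨ν, hν⟩ := exists_diagram (fun j => if j = a then m else lam.rowLen j)
        (by
          intro j
          have e1 : lam.rowLen (j + 1) ≤ lam.rowLen j := rowLen_le lam (by omega)
          rcases eq_or_ne j a with rfl | hj
          · simp only [eq_self_iff_true, ite_true, if_neg (by omega : ¬ j + 1 = j)]
            omega
          · rcases eq_or_ne (j + 1) a with h | h
            · simp only [if_pos h, if_neg hj]
              have e2 : lam.rowLen a ≤ lam.rowLen j := rowLen_le lam (by omega)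
              omega
            · simp only [if_neg h, if_neg hj]
              omega)
        (lam.colLen 0)
        (by
          intro j hj
          have h0 := rowLen_eventually_zero lam j hj
          have hacol : a < lam.colLen 0 := by
            by_contra hcon
            have := rowLen_eventually_zero lam a (by omega)
            omega
          simp only [if_neg (show ¬ j = a by omega)]
          exact h0)
      have hν' : ∀ i, ν.rowLen i = if i = a then m else lam.rowLen i := hν
      have hrows : ∀ j, j ≠ a → ν.rowLen j = lam.rowLen j := by
        intro j hj
        rw [hν', if_neg hj]
      have hrowa : ν.rowLen a = m := by rw [hν', if_pos rfl]
      have hmove : RemoveHorizHook ℓ lam ν := by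
        refine moveN_to_removeHoriz (by omega) (i := a) (by omega) hrows (by omega)
      have hsub : ν.cells ⊆ lam.cells := by
        refine cells_subset_of_rowLen_le ?_
        intro j
        rcases eq_or_ne j a with rfl | hj
        · omega
        · rw [hrows j hj]
      have hlt : ν.cells.card < lam.cells.card := by
        refine Finset.card_lt_card ?_
        rw [Finset.ssubset_iff_of_subset hsub]
        refine ⟨(a, m), (YoungDiagram.mem_cells _).mpr (YoungDiagram.mem_iff_lt_rowLen.mpr (by omega)), ?_⟩
        rw [YoungDiagram.mem_cells, YoungDiagram.mem_iff_lt_rowLen]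
        omega
      have hellpν : IsEllPartition ℓ ν := by
        constructor
        · refine regular_of_NHgoodN hl (hnhgood ν ?_)
          exact Relation.ReflTransGen.single hmove
        · intro ρ hreach s hs
          exact hellp.2 ρ (Relation.ReflTransGen.head hmove hreach) s hs
      obtain ⟨μ, r', κ', hd⟩ := ih ν (by omega) hellpν
      obtain ⟨hcore, hne, hanti, hz, heq, htail⟩ := hd
      have hcore' : CoreN ℓ μ := (isCore_iff_coreN (by omega) μ).mp hcore
      have hwin : μ.rowLen 0 < μ.rowLen 1 + ℓ := by
        have := core_diff_le (by omega) hcore' 0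
        simpa using this
      have hμ01 : μ.rowLen 1 ≤ μ.rowLen 0 := rowLen_le μ (by omega)
      rcases Nat.lt_trichotomy a (r' + 1) with har | har | har
      · -- a ≤ r' : bump κ' at a
        have har' : a ≤ r' := by omega
        have hstrict : 1 ≤ a → κ' a + 1 ≤ κ' (a - 1) := by
          intro ha1
          have hmono : lam.rowLen a ≤ lam.rowLen (a - 1) := rowLen_le lam (by omega)
          have e1 : lam.rowLen (a - 1) = ν.rowLen (a - 1) := (hrows _ (by omega)).symm
          have e2 := heq (a - 1) (by omega)
          have e3 := heq a har'
          have hsplit : (r' - (a - 1)) * (ℓ - 1) = (r' - a) * (ℓ - 1) + (ℓ - 1) := by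
            have : r' - (a - 1) = (r' - a) + 1 := by omega
            rw [this, Nat.succ_mul]
          by_contra hcon
          have hk : κ' (a - 1) ≤ κ' a := by omega
          have hkm : ℓ * κ' (a - 1) ≤ ℓ * κ' a := Nat.mul_le_mul_left ℓ hk
          omega
        refine ⟨μ, r', fun j => if j = a then κ' j + 1 else κ' j, hcore, hne, ?_, ?_, ?_, ?_⟩
        · apply antitone_nat_of_succ_le
          intro j
          rcases eq_or_ne j a with rfl | hj
          · simp only [eq_self_iff_true, ite_true, if_neg (by omega : ¬ j + 1 = j)]
            have := hanti (by omega : j ≤ j + 1)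
            omega
          · rcases eq_or_ne (j + 1) a with h | h
            · simp only [if_pos h, if_neg hj]
              have := hstrict (by omega)
              rw [show a - 1 = j by omega] at this
              rw [h]
              omega
            · simp only [if_neg h, if_neg hj]
              exact hanti (by omega : j ≤ j + 1)
        · intro j hj
          show (if j = a then κ' j + 1 else κ' j) = 0
          rw [if_neg (by omega : ¬ j = a)]
          exact hz j hj
        · intro j hj
          show lam.rowLen j = μ.rowLen 0 + (r' - j) * (ℓ - 1)
            + ℓ * (if j = a then κ' j + 1 else κ' j)
          rcases eq_or_ne j a with rfl | hjne
          · simp only [eq_self_iff_true, ite_true]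
            have e3 := heq j har'
            rw [Nat.mul_succ]
            omega
          · simp only [if_neg hjne]
            rw [← hrows j hjne]
            exact heq j hj
        · intro j hj
          rw [← hrows (r' + j) (by omega)]
          exact htail j hj
      · -- a = r' + 1 : impossible, lemmaF gives a reachable non-horizontal hook
        exfalso
        subst har
        have e0 := heq r' le_rfl
        rw [Nat.sub_self, Nat.zero_mul] at e0
        have er : lam.rowLen r' = μ.rowLen 0 + 0 + ℓ * κ' r' := by
          rw [← hrows r' (by omega)]
          exact e0
        have et1 := htail 1 le_rfl
        have er1 : lam.rowLen (r' + 1) = μ.rowLen 1 + ℓ := by omega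
        have er2 : lam.rowLen (r' + 2) ≤ μ.rowLen 1 := by
          have h2 := htail 2 (by omega)
          have h4 : lam.rowLen (r' + 2) = ν.rowLen (r' + 2) := (hrows _ (by omega)).symm
          have h5 : μ.rowLen 2 ≤ μ.rowLen 1 := rowLen_le μ (by omega)
          omega
        have hmono : lam.rowLen (r' + 1) ≤ lam.rowLen r' := rowLen_le lam (by omega)
        have hk1 : 1 ≤ κ' r' := by
          by_contra hcon
          have hk0 : κ' r' = 0 := by omega
          rw [hk0, Nat.mul_zero] at er
          omega
        obtain ⟨σ, hreach, a', c', m', hw⟩ :=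
          lemmaF hl (κ' r') lam r' (μ.rowLen 0) (μ.rowLen 1) hk1 (by omega) er1 er2
            (by omega) (by omega)
        exact hnhgood σ hreach ⟨a', c', m', hw⟩
      · -- a > r' + 1 : impossible, the core would have a big drop
        exfalso
        have e1 : lam.rowLen (a - 1) = μ.rowLen (a - 1 - r') := by
          rw [← hrows (a - 1) (by omega)]
          have := htail (a - 1 - r') (by omega)
          rw [show r' + (a - 1 - r') = a - 1 by omega] at this
          exact this
        have e2 : lam.rowLen a = μ.rowLen (a - r') + ℓ := by
          have := htail (a - r') (by omega)
          rw [show r' + (a - r') = a by omega] at this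
          omega
        have hmono : lam.rowLen a ≤ lam.rowLen (a - 1) := rowLen_le lam (by omega)
        have := core_diff_le (by omega : 1 ≤ ℓ) hcore' (a - 1 - r')
        rw [show a - 1 - r' + 1 = a - r' by omega] at this
        omega
    · exact exists_decomp_of_coreN hl (exact_hook_of_div (by omega) hex)

end EllAux

/-- Every `ℓ`-partition corresponds to a unique triple `(μ, r, κ)` as above, and
conversely every such triple yields an `ℓ`-partition. -/
theorem stmt_10 (ℓ : ℕ) (hℓ : 2 ≤ ℓ) (lam : YoungDiagram) :
    IsEllPartition ℓ lam ↔
      ∃! t : YoungDiagram × ℕ × (ℕ → ℕ), Decomp ℓ t.1 t.2.1 t.2.2 lam := by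
  constructor
  · intro hellp
    obtain ⟨μ, r, κ, hd⟩ :=
      EllAux.exists_decomp_of_ellp hℓ lam.cells.card lam le_rfl hellp
    refine ⟨(μ, r, κ), hd, ?_⟩
    rintro ⟨μ', r', κ'⟩ hd'
    obtain ⟨e1, e2, e3⟩ := EllAux.decomp_unique hℓ hd' hd
    simp only [Prod.mk.injEq]
    exact ⟨e1, e2, e3⟩
  · rintro ⟨⟨μ, r, κ⟩, hd, -⟩
    exact EllAux.ellp_of_decomp hℓ hd
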